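/- In the ribbon algebra A_G, for all n, n', g, g' ∈ G: if gM ≠ g'M (the left cosets of M are distinct) then T^{n,g} · T^{n',g'} = 0; and for equal second index, T^{n,g} · T^{n',g} = T^{nn',g}. -/

import Mathlib

open scoped Classical

/-- The ribbon basis element `F^{h,g} := single h 𝟙_{{g}}` of the algebra
`A_G = MonoidAlgebra (G → ℂ) G`. -/
noncomputable def Frib {G : Type*} [Group G] (h g : G) : MonoidAlgebra (G → ℂ) G :=
  MonoidAlgebra.single h (fun x => if x = g then (1 : ℂ) else 0)

lemma Frib_mul {G : Type*} [Group G] (h₁ g₁ h₂ g₂ : G) :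
    Frib h₁ g₁ * Frib h₂ g₂ = if g₁ = g₂ then Frib (h₁ * h₂) g₁ else 0 := by
  unfold Frib
  rw [MonoidAlgebra.single_mul_single]
  split_ifs with h
  · subst h
    congr 1
    funext x
    simp [Pi.mul_apply]
  · convert MonoidAlgebra.single_zero (h₁ * h₂)
    funext x
    simp only [Pi.mul_apply, Pi.zero_apply]
    split_ifs with h1 h2
    · exact absurd (h1.symm.trans h2) h
    all_goals simp

/-- The condensation ribbon operator `T^{n,g} := ∑_{ℓ ∈ M} F^{ℓnℓ⁻¹, ℓg⁻¹}`. -/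
noncomputable def Trib {G : Type*} [Group G] [Fintype G] (M : Subgroup G) (n g : G) :
    MonoidAlgebra (G → ℂ) G :=
  ∑ ℓ : M, Frib ((ℓ : G) * n * (ℓ : G)⁻¹) ((ℓ : G) * g⁻¹)

/-- If `gM ≠ g'M` then `T^{n,g} · T^{n',g'} = 0`; and for equal second index,
`T^{n,g} · T^{n',g} = T^{nn',g}`. -/
theorem Trib_mul_Trib {G : Type*} [Group G] [Fintype G] (M : Subgroup G) :
    (∀ n n' g g' : G, (g : G ⧸ M) ≠ (g' : G ⧸ M) → Trib M n g * Trib M n' g' = 0) ∧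
    (∀ n n' g : G, Trib M n g * Trib M n' g = Trib M (n * n') g) := by
  constructor
  · intro n n' g g' hgg'
    rw [Trib, Trib, Finset.sum_mul_sum]
    apply Finset.sum_eq_zero
    intro ℓ _
    apply Finset.sum_eq_zero
    intro ℓ' _
    rw [Frib_mul, if_neg]
    intro h
    apply hgg'
    rw [QuotientGroup.eq]
    have : g⁻¹ * g' = (ℓ : G)⁻¹ * (ℓ' : G) := by
      have h2 : (ℓ : G) * g⁻¹ * g' = (ℓ' : G) := by rw [h]; group
      rw [← h2]; group
    rw [this]
    exact mul_mem (inv_mem ℓ.2) ℓ'.2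
  · intro n n' g
    rw [Trib, Trib, Trib, Finset.sum_mul_sum]
    apply Finset.sum_congr rfl
    intro ℓ _
    rw [Finset.sum_eq_single ℓ]
    · rw [Frib_mul, if_pos rfl]
      congr 1
      group
    · intro ℓ' _ hne
      rw [Frib_mul, if_neg]
      intro h
      exact hne (Subtype.ext (mul_right_cancel h)).symm
    · intro h; exact absurd (Finset.mem_univ ℓ) h
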